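/- Let X be a connected metric space, f : X → X a continuous map with a compact global trapping region, and S a stream of f. Suppose the set R_S of S-recurrent points is written as R_S = C₁ ∪ C₂ where C₁ and C₂ are nonempty, closed, disjoint, and each is saturated under S-equivalence (if u ∈ Cᵢ and v is S-recurrent with (u,v) ∈ S and (v,u) ∈ S, then v ∈ Cᵢ). Then there exist u ∈ C₁ and v ∈ C₂ with (u,v) ∈ S or (v,u) ∈ S; i.e., the graph of every stream of a semi-flow with compact dynamics is connected. -/

import Mathlib

open Filter Metric Set

/-- The orbit relation of a map `f`. -/
def OrbitRel {X : Type*} (f : X → X) : Set (X × X) :=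
  {p | ∃ n : ℕ, f^[n] p.1 = p.2}

/-- The ω-limit set of `x` under `f`. -/
def OmegaSet {X : Type*} [TopologicalSpace X] (f : X → X) (x : X) : Set X :=
  {z | MapClusterPt z atTop fun n : ℕ => f^[n] x}

/-- `Q` is a compact global trapping region for `f`. -/
def IsCompactGlobalTrapping {X : Type*} [MetricSpace X] (f : X → X) (Q : Set X) : Prop :=
  Q.Nonempty ∧ IsCompact Q ∧ Set.MapsTo f Q Q ∧
  (∀ x : X, (OmegaSet f x).Nonempty ∧ OmegaSet f x ⊆ Q) ∧
  ∃ η > (0 : ℝ), ∀ ε : ℝ, 0 < ε → ε < η → ∀ δ : ℝ, 0 < δ → δ < η → ∃ N : ℕ,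
    ∀ z : X, Metric.infDist z Q ≤ δ → ∀ n ≥ N, Metric.infDist (f^[n] z) Q ≤ ε

/-- A stream of `f`: a reflexive, transitive, closed relation containing the orbit relation. -/
def IsStream {X : Type*} [TopologicalSpace X] (f : X → X) (S : Set (X × X)) : Prop :=
  (∀ x : X, (x, x) ∈ S) ∧
  (∀ x y z : X, (x, y) ∈ S → (y, z) ∈ S → (x, z) ∈ S) ∧
  IsClosed S ∧ OrbitRel f ⊆ S

/-- `x` is an `S`-recurrent point. -/
def SRecurrent {X : Type*} (f : X → X) (S : Set (X × X)) (x : X) : Prop :=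
  f x = x ∨ ∃ y ≠ x, (x, y) ∈ S ∧ (y, x) ∈ S

open Topology

lemma omega_shift {X : Type*} [TopologicalSpace X] (f : X → X) (x : X) (n : ℕ) :
    OmegaSet f (f^[n] x) = OmegaSet f x := by
  ext z
  have hfun : (fun m : ℕ => f^[m] (f^[n] x)) = (fun m : ℕ => f^[m] x) ∘ (· + n) := by
    funext m; simp [Function.comp, Function.iterate_add_apply]
  constructor
  · intro h
    exact MapClusterPt.of_comp (tendsto_add_atTop_nat n) (hfun ▸ h)
  · intro h
    show MapClusterPt z atTop _
    rw [hfun, mapClusterPt_comp, map_add_atTop_eq_nat]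
    exact h

lemma omega_subseq {X : Type*} [MetricSpace X] {f : X → X} {x z : X}
    (hz : z ∈ OmegaSet f x) :
    ∃ ψ : ℕ → ℕ, StrictMono ψ ∧ Tendsto (fun j => f^[ψ j] x) atTop (𝓝 z) := by
  obtain ⟨ψ, hψ, h⟩ := TopologicalSpace.FirstCountableTopology.tendsto_subseq hz
  exact ⟨ψ, hψ, h⟩

lemma S_rel_omega {X : Type*} [MetricSpace X] {f : X → X} {S : Set (X × X)}
    (hS : IsStream f S) {x z : X} (hz : z ∈ OmegaSet f x) : (x, z) ∈ S := by
  obtain ⟨ψ, hψ, h⟩ := omega_subseq hz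
  have hmem : ∀ j, ((x, f^[ψ j] x) : X × X) ∈ S := fun j => hS.2.2.2 ⟨ψ j, rfl⟩
  have : Tendsto (fun j => ((x, f^[ψ j] x) : X × X)) atTop (𝓝 (x, z)) :=
    tendsto_const_nhds.prodMk_nhds h
  exact hS.2.2.1.mem_of_tendsto this (Eventually.of_forall hmem)

lemma S_rel_omega_pair {X : Type*} [MetricSpace X] {f : X → X} {S : Set (X × X)}
    (hS : IsStream f S) {x z z' : X} (hz : z ∈ OmegaSet f x) (hz' : z' ∈ OmegaSet f x) :
    (z, z') ∈ S := by
  obtain ⟨ψ, hψ, h⟩ := omega_subseq hz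
  have hmem : ∀ j, ((f^[ψ j] x, z') : X × X) ∈ S := by
    intro j
    exact S_rel_omega hS (x := f^[ψ j] x) (by rw [omega_shift]; exact hz')
  have : Tendsto (fun j => ((f^[ψ j] x, z') : X × X)) atTop (𝓝 (z, z')) :=
    h.prodMk_nhds tendsto_const_nhds
  exact hS.2.2.1.mem_of_tendsto this (Eventually.of_forall hmem)

lemma omega_mapsto {X : Type*} [TopologicalSpace X] {f : X → X} (hf : Continuous f)
    {x z : X} (hz : z ∈ OmegaSet f x) : f z ∈ OmegaSet f x := by
  have h1 : MapClusterPt (f z) atTop (f ∘ fun n : ℕ => f^[n] x) :=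
    hz.continuousAt_comp hf.continuousAt
  have hfun : (f ∘ fun n : ℕ => f^[n] x) = fun n : ℕ => f^[n] (f^[1] x) := by
    funext n
    show f (f^[n] x) = f^[n] (f^[1] x)
    rw [Function.iterate_one, ← Function.iterate_succ_apply]
    exact (Function.iterate_succ_apply' f n x).symm
  rw [hfun] at h1
  have : f z ∈ OmegaSet f (f^[1] x) := h1
  rwa [omega_shift] at this

lemma omega_recurrent {X : Type*} [MetricSpace X] {f : X → X} (hf : Continuous f)
    {S : Set (X × X)} (hS : IsStream f S) {x z : X} (hz : z ∈ OmegaSet f x) :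
    SRecurrent f S z := by
  by_cases hzz : ∃ z' ∈ OmegaSet f x, z' ≠ z
  · obtain ⟨z', hz', hne⟩ := hzz
    exact Or.inr ⟨z', hne, S_rel_omega_pair hS hz hz', S_rel_omega_pair hS hz' hz⟩
  · push_neg at hzz
    exact Or.inl (hzz _ (omega_mapsto hf hz))

lemma closed_omega_in {X : Type*} [MetricSpace X] {f : X → X} (hf : Continuous f)
    {S : Set (X × X)} (hS : IsStream f S) {Q : Set X} (hQc : IsCompact Q)
    (hω : ∀ x : X, (OmegaSet f x).Nonempty ∧ OmegaSet f x ⊆ Q)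
    {C D : Set X} (hCcl : IsClosed C)
    (hdich : ∀ x : X, OmegaSet f x ⊆ C ∨ OmegaSet f x ⊆ D)
    (hcross : ∀ a ∈ C, ∀ z ∈ D, (z, a) ∉ S) :
    IsClosed {x : X | OmegaSet f x ⊆ C} := by
  apply IsSeqClosed.isClosed
  intro xs x hxs hlim
  rcases hdich x with h | h
  · exact h
  exfalso
  obtain ⟨z, hz⟩ := (hω x).1
  have hzD : z ∈ D := h hz
  obtain ⟨ψ, hψ, hψt⟩ := omega_subseq hz
  -- diagonal choice
  have hchoice : ∀ j : ℕ, ∃ k : ℕ, dist (f^[ψ j] (xs k)) (f^[ψ j] x) < 1 / (j + 1) := by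
    intro j
    have hc : Tendsto (fun k => f^[ψ j] (xs k)) atTop (𝓝 (f^[ψ j] x)) :=
      ((hf.iterate (ψ j)).continuousAt.tendsto).comp hlim
    have := (tendsto_iff_dist_tendsto_zero.mp hc).eventually
      (eventually_lt_nhds (show (0:ℝ) < 1 / (j + 1) by positivity))
    exact this.exists
  choose K hK using hchoice
  set y : ℕ → X := fun j => f^[ψ j] (xs (K j)) with hy
  have hyz : Tendsto y atTop (𝓝 z) := by
    rw [tendsto_iff_dist_tendsto_zero]
    apply squeeze_zero (f := fun j : ℕ => dist (y j) z)
      (g := fun j : ℕ => 1 / (j + 1 : ℝ) + dist (f^[ψ j] x) z) (fun j => dist_nonneg)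
    · intro j
      calc dist (y j) z ≤ dist (y j) (f^[ψ j] x) + dist (f^[ψ j] x) z := dist_triangle _ _ _
        _ ≤ 1 / (j + 1) + dist (f^[ψ j] x) z := by
            exact add_le_add (le_of_lt (hK j)) le_rfl
    · have h1 : Tendsto (fun j : ℕ => 1 / (j + 1 : ℝ)) atTop (𝓝 0) :=
        tendsto_one_div_add_atTop_nhds_zero_nat
      have h2 : Tendsto (fun j => dist (f^[ψ j] x) z) atTop (𝓝 0) :=
        tendsto_iff_dist_tendsto_zero.mp hψt
      simpa using h1.add h2
  -- pick omega points of the approximating orbits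
  have hw : ∀ j : ℕ, ∃ w, w ∈ OmegaSet f (xs (K j)) := fun j => (hω _).1
  choose w hwmem using hw
  have hwC : ∀ j, w j ∈ C := fun j => hxs (K j) (hwmem j)
  have hwQ : ∀ j, w j ∈ Q := fun j => (hω _).2 (hwmem j)
  obtain ⟨a, haQ, φ, hφ, hφt⟩ := hQc.tendsto_subseq hwQ
  have haC : a ∈ C := hCcl.mem_of_tendsto hφt (Eventually.of_forall fun i => hwC (φ i))
  have hrel : ∀ j, ((y j, w j) : X × X) ∈ S := by
    intro j
    apply S_rel_omega hS
    rw [hy]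
    show w j ∈ OmegaSet f (f^[ψ j] (xs (K j)))
    rw [omega_shift]
    exact hwmem j
  have hpt : Tendsto (fun i => ((y (φ i), w (φ i)) : X × X)) atTop (𝓝 (z, a)) :=
    (hyz.comp hφ.tendsto_atTop).prodMk_nhds hφt
  have : ((z, a) : X × X) ∈ S :=
    hS.2.2.1.mem_of_tendsto hpt (Eventually.of_forall fun i => hrel (φ i))
  exact hcross a haC z hzD this

/-- the graph of every stream of a semi-flow with compact dynamics
is connected. -/
theorem stmt_1 {X : Type*} [MetricSpace X] [ConnectedSpace X]
    (f : X → X) (hf : Continuous f) (Q : Set X) (hQ : IsCompactGlobalTrapping f Q)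
    (S : Set (X × X)) (hS : IsStream f S)
    (C₁ C₂ : Set X)
    (hunion : {x | SRecurrent f S x} = C₁ ∪ C₂)
    (h1ne : C₁.Nonempty) (h2ne : C₂.Nonempty)
    (h1cl : IsClosed C₁) (h2cl : IsClosed C₂)
    (hdisj : Disjoint C₁ C₂)
    (h1sat : ∀ u ∈ C₁, ∀ v : X, SRecurrent f S v → (u, v) ∈ S → (v, u) ∈ S → v ∈ C₁)
    (h2sat : ∀ u ∈ C₂, ∀ v : X, SRecurrent f S v → (u, v) ∈ S → (v, u) ∈ S → v ∈ C₂) :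
    ∃ u ∈ C₁, ∃ v ∈ C₂, (u, v) ∈ S ∨ (v, u) ∈ S := by
  by_contra hcon
  push_neg at hcon
  obtain ⟨-, hQc, -, hω, -⟩ := hQ
  have hrecmem : ∀ x z : X, z ∈ OmegaSet f x → z ∈ C₁ ∪ C₂ := by
    intro x z hz
    have : z ∈ {x | SRecurrent f S x} := omega_recurrent hf hS hz
    rwa [hunion] at this
  have hdich : ∀ x : X, OmegaSet f x ⊆ C₁ ∨ OmegaSet f x ⊆ C₂ := by
    intro x
    obtain ⟨z, hz⟩ := (hω x).1
    rcases hrecmem x z hz with h1 | h2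
    · left
      intro z' hz'
      exact h1sat z h1 z' (omega_recurrent hf hS hz')
        (S_rel_omega_pair hS hz hz') (S_rel_omega_pair hS hz' hz)
    · right
      intro z' hz'
      exact h2sat z h2 z' (omega_recurrent hf hS hz')
        (S_rel_omega_pair hS hz hz') (S_rel_omega_pair hS hz' hz)
  set A := {x : X | OmegaSet f x ⊆ C₁} with hAdef
  set B := {x : X | OmegaSet f x ⊆ C₂} with hBdef
  have hsub1 : C₁ ⊆ A := by
    intro u hu
    rcases hdich u with h | h
    · exact h
    · exfalso
      obtain ⟨z, hz⟩ := (hω u).1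
      exact (hcon u hu z (h hz)).1 (S_rel_omega hS hz)
  have hsub2 : C₂ ⊆ B := by
    intro v hv
    rcases hdich v with h | h
    · exfalso
      obtain ⟨z, hz⟩ := (hω v).1
      exact (hcon z (h hz) v hv).2 (S_rel_omega hS hz)
    · exact h
  have hAcl : IsClosed A :=
    closed_omega_in hf hS hQc hω h1cl hdich (fun a ha z hz => (hcon a ha z hz).2)
  have hBcl : IsClosed B :=
    closed_omega_in hf hS hQc hω h2cl (fun x => (hdich x).symm)
      (fun a ha z hz => (hcon z hz a ha).1)
  have hABdisj : ∀ x : X, x ∈ A → x ∈ B → False := by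
    intro x hxA hxB
    obtain ⟨z, hz⟩ := (hω x).1
    exact Set.disjoint_left.mp hdisj (hxA hz) (hxB hz)
  have hAeq : A = Bᶜ := by
    ext x
    constructor
    · intro hx hxB
      exact hABdisj x hx hxB
    · intro hx
      rcases hdich x with h | h
      · exact h
      · exact absurd h hx
  have hAopen : IsOpen A := hAeq ▸ hBcl.isOpen_compl
  rcases isClopen_iff.mp ⟨hAcl, hAopen⟩ with hA0 | hA1
  · obtain ⟨u, hu⟩ := h1ne
    have : u ∈ A := hsub1 hu
    rw [hA0] at this
    exact this
  · obtain ⟨v, hv⟩ := h2ne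
    exact hABdisj v (hA1 ▸ Set.mem_univ v) (hsub2 hv)
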